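/- Let X be a path-connected topological space, A ⊆ X a path-connected subspace, and f : X̃ → X a path-connected covering map such that Ã = f⁻¹(A) is path-connected and the inclusion-induced map π₁(Ã) → π₁(X̃) is an isomorphism. Then the inclusion-induced map π₁(A) → π₁(X) is surjective. -/

import Mathlib

open CategoryTheory

section Lifting

variable {X Xt : Type} [TopologicalSpace X] [TopologicalSpace Xt] {f : Xt → X}

private lemma extend_step {F : Type*} [TopologicalSpace F]
    {γ : ℝ → X} (hγ : Continuous γ)
    (T : Bundle.Trivialization F f) {t₁ t₂ : ℝ} (h12 : t₁ ≤ t₂)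
    (hsub : ∀ s ∈ Set.Icc t₁ t₂, γ s ∈ T.baseSet)
    {g : ℝ → Xt} (hg : Continuous g) (hlift : ∀ s ≤ t₁, f (g s) = γ s) :
    ∃ g₂ : ℝ → Xt, Continuous g₂ ∧ (∀ s ≤ t₁, g₂ s = g s) ∧ ∀ s ≤ t₂, f (g₂ s) = γ s := by
  set c : F := (T (g t₁)).2 with hc
  set σ : X → Xt := fun x => T.toOpenPartialHomeomorph.symm (x, c) with hσdef
  set clamp : ℝ → ℝ := fun s => min (max s t₁) t₂ with hclampdef
  have hclampcont : Continuous clamp := (continuous_id.max continuous_const).min continuous_const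
  have hclampmem : ∀ s, clamp s ∈ Set.Icc t₁ t₂ := fun s =>
    ⟨le_min (le_max_right _ _) h12, min_le_right _ _⟩
  have hσcont : Continuous fun s => σ (γ (clamp s)) := by
    refine T.toOpenPartialHomeomorph.continuousOn_symm.comp_continuous
      (((hγ.comp hclampcont).prodMk continuous_const)) (fun s => ?_)
    rw [T.mem_target]
    exact hsub _ (hclampmem s)
  have hmemsrc : g t₁ ∈ T.source := T.mem_source.2 (by
    rw [hlift t₁ le_rfl]; exact hsub t₁ ⟨le_rfl, h12⟩)
  have hclampt₁ : clamp t₁ = t₁ := by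
    simp [hclampdef, max_self, min_eq_left h12]
  have hσt₁ : σ (γ t₁) = g t₁ := by
    have h1 : (γ t₁, c) = T (g t₁) := by
      refine Prod.ext ?_ rfl
      rw [T.coe_fst hmemsrc, hlift t₁ le_rfl]
    show T.toOpenPartialHomeomorph.symm (γ t₁, c) = g t₁
    rw [h1]
    exact T.toOpenPartialHomeomorph.left_inv hmemsrc
  refine ⟨fun s => if s ≤ t₁ then g s else σ (γ (clamp s)), ?_, ?_, ?_⟩
  · refine Continuous.if_le hg hσcont continuous_id continuous_const (fun s hs => ?_)
    subst hs
    rw [hclampt₁, hσt₁]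
  · intro s hs
    show (if s ≤ t₁ then g s else σ (γ (clamp s))) = g s
    rw [if_pos hs]
  · intro s hs
    show f (if s ≤ t₁ then g s else σ (γ (clamp s))) = γ s
    by_cases h : s ≤ t₁
    · rw [if_pos h]; exact hlift s h
    · rw [if_neg h]
      have hs1 : t₁ ≤ s := le_of_not_ge h
      have hclamps : clamp s = s := by
        simp [hclampdef, max_eq_left hs1, min_eq_left hs]
      rw [hclamps]
      exact T.proj_symm_apply' (hsub s ⟨hs1, hs⟩)

private lemma exists_path_lift (hf : IsCoveringMap f) {x y : X} (γ : Path x y)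
    (b₀ : Xt) (hb : f b₀ = x) :
    ∃ g : ℝ → Xt, Continuous g ∧ g 0 = b₀ ∧ ∀ s : unitInterval, f (g ↑s) = γ s := by
  set Γ := γ.extend with hΓdef
  have hΓ : Continuous Γ := γ.continuous_extend
  set P : ℝ → Prop := fun t => ∃ g : ℝ → Xt, Continuous g ∧ g 0 = b₀ ∧ ∀ s ≤ t, f (g s) = Γ s
    with hPdef
  have hP0 : P 0 := ⟨fun _ => b₀, continuous_const, rfl, fun s hs => by
    rw [hΓdef, γ.extend_of_le_zero hs, hb]⟩
  set S : Set ℝ := {t | t ≤ 1 ∧ P t} with hSdef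
  have h0S : (0:ℝ) ∈ S := ⟨zero_le_one, hP0⟩
  have hbdd : BddAbove S := ⟨1, fun t ht => ht.1⟩
  have hne : S.Nonempty := ⟨0, h0S⟩
  set t₀ := sSup S with ht₀def
  have ht₀0 : 0 ≤ t₀ := le_csSup hbdd h0S
  have ht₀1 : t₀ ≤ 1 := csSup_le hne fun t ht => ht.1
  haveI : Nonempty (f ⁻¹' {Γ t₀}) := by
    obtain ⟨Γ', hΓ', -⟩ := hf.exists_path_lifts γ.toContinuousMap b₀ (by rw [hb]; exact γ.source)
    refine ⟨⟨Γ' ⟨t₀, ht₀0, ht₀1⟩, ?_⟩⟩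
    show f _ = Γ t₀
    rw [hΓdef, γ.extend_extends' ⟨t₀, ht₀0, ht₀1⟩]
    exact congrFun hΓ' _
  obtain ⟨ε, hε, hball⟩ : ∃ ε > 0,
      Metric.ball t₀ ε ⊆ Γ ⁻¹' (hf (Γ t₀)).toTrivialization.baseSet := by
    refine Metric.isOpen_iff.1
      ((hf (Γ t₀)).toTrivialization.open_baseSet.preimage hΓ) t₀ ?_
    exact (hf (Γ t₀)).mem_toTrivialization_baseSet
  have hPt₀ : P t₀ := by
    obtain ⟨t₁, ht₁S, ht₁⟩ : ∃ t₁ ∈ S, t₀ - ε < t₁ :=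
      exists_lt_of_lt_csSup hne (by linarith)
    have ht₁le : t₁ ≤ t₀ := le_csSup hbdd ht₁S
    set t₁' := max t₁ 0 with ht₁'def
    have ht₁'S : t₁' ∈ S := by
      rcases le_total t₁ 0 with h | h
      · rw [ht₁'def, max_eq_right h]; exact h0S
      · rw [ht₁'def, max_eq_left h]; exact ht₁S
    have ht₁'le : t₁' ≤ t₀ := max_le ht₁le ht₀0
    obtain ⟨g, hg, hg0, hglift⟩ := ht₁'S.2
    obtain ⟨g₂, hg₂, hg₂eq, hg₂lift⟩ := extend_step hΓ (hf (Γ t₀)).toTrivialization ht₁'le (fun s hs => hball (by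
      rw [Metric.mem_ball, Real.dist_eq, abs_sub_lt_iff]
      have h1 : t₁ ≤ t₁' := le_max_left _ _
      constructor <;> [linarith [hs.2]; linarith [hs.1]])) hg hglift
    exact ⟨g₂, hg₂, by rw [hg₂eq 0 (le_max_right _ _), hg0], hg₂lift⟩
  have ht₀eq : t₀ = 1 := by
    by_contra h
    have hlt : t₀ < 1 := lt_of_le_of_ne ht₀1 h
    set t₂ := min (t₀ + ε/2) 1 with ht₂def
    have h2 : t₀ < t₂ := lt_min (by linarith) hlt
    obtain ⟨g, hg, hg0, hglift⟩ := hPt₀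
    obtain ⟨g₂, hg₂, hg₂eq, hg₂lift⟩ := extend_step hΓ (hf (Γ t₀)).toTrivialization (le_of_lt h2) (fun s hs => hball (by
      rw [Metric.mem_ball, Real.dist_eq, abs_sub_lt_iff]
      have h3 : t₂ ≤ t₀ + ε/2 := min_le_left _ _
      constructor <;> [linarith [hs.2]; linarith [hs.1]])) hg hglift
    have ht₂S : t₂ ∈ S := ⟨min_le_right _ _, g₂, hg₂, by rw [hg₂eq 0 ht₀0, hg0], hg₂lift⟩
    exact absurd (le_csSup hbdd ht₂S) (not_le.2 h2)
  obtain ⟨g, hg, hg0, hglift⟩ := hPt₀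
  refine ⟨g, hg, hg0, fun s => ?_⟩
  rw [hglift ↑s (by rw [ht₀eq]; exact s.2.2)]
  exact γ.extend_extends' s

end Lifting
open CategoryTheory

/-- The homomorphism on fundamental groups induced by a continuous map. -/
noncomputable def π₁ind {X Y : Type} [TopologicalSpace X] [TopologicalSpace Y]
    (f : C(X, Y)) (x : X) : FundamentalGroup X x →* FundamentalGroup Y (f x) :=
  Functor.mapEnd (FundamentalGroupoid.mk x)
    (FundamentalGroupoid.fundamentalGroupoidFunctor.map (X := TopCat.of X) (Y := TopCat.of Y) (TopCat.ofHom f))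

section QuotAlg

attribute [local instance] Path.Homotopic.setoid

variable {X Y Z : Type} [TopologicalSpace X] [TopologicalSpace Y] [TopologicalSpace Z]

private lemma map_lift' {x y : X} (p : Path x y) (g : C(X,Y)) :
    (⟦p.map g.continuous⟧ : Path.Homotopic.Quotient _ _) = Path.Homotopic.Quotient.map ⟦p⟧ g := rfl

private lemma comp_lift' {x y z : X} (p : Path x y) (q : Path y z) :
    (⟦p.trans q⟧ : Path.Homotopic.Quotient x z) = Path.Homotopic.Quotient.trans ⟦p⟧ ⟦q⟧ := rfl

private lemma mapFn_mapFn {x y : X} (P : Path.Homotopic.Quotient x y) (g : C(X,Y)) (h : C(Y,Z)) :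
    (P.map g).map h = P.map (h.comp g) := by
  induction P using Quotient.inductionOn with
  | h p =>
    rw [← map_lift', ← map_lift', ← map_lift',
      Path.map_map]
    rfl

private lemma mapFn_comp {x y z : X} (P : Path.Homotopic.Quotient x y)
    (Q : Path.Homotopic.Quotient y z) (g : C(X,Y)) :
    (P.trans Q).map g = (P.map g).trans (Q.map g) := by
  induction P, Q using Quotient.inductionOn₂ with
  | h p q =>
    rw [← comp_lift', ← map_lift', Path.map_trans,
      comp_lift']
    rw [← map_lift', ← map_lift']

private def fp {x₀ x₁ : X} (p : Path.Homotopic.Quotient x₀ x₁) :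
    FundamentalGroupoid.mk x₀ ⟶ FundamentalGroupoid.mk x₁ := p

private lemma comp_trans_symm {x y z : X}
    (P : Path.Homotopic.Quotient x y) (w : Path y z) :
    (P.trans ⟦w⟧).trans ⟦w.symm⟧ = P := by
  show (fp P ≫ fp ⟦w⟧) ≫ fp ⟦w.symm⟧ = fp P
  rw [Category.assoc]
  have h2 : (⟦w.trans w.symm⟧ : Path.Homotopic.Quotient y y) = ⟦Path.refl y⟧ :=
    Quotient.sound ⟨(Path.Homotopy.reflTransSymm w).symm⟩
  have h1 : fp ⟦w⟧ ≫ fp ⟦w.symm⟧ = 𝟙 (FundamentalGroupoid.mk y) := by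
    show fp (Path.Homotopic.Quotient.trans ⟦w⟧ ⟦w.symm⟧) = 𝟙 (FundamentalGroupoid.mk y)
    rw [← comp_lift', h2]
    rfl
  rw [h1, Category.comp_id]

private lemma π₁ind_hom (g : C(X,Y)) (x : X) (p : FundamentalGroup X x) :
    (π₁ind g x p) = Path.Homotopic.Quotient.map
      (p : Path.Homotopic.Quotient x x) g := rfl

end QuotAlg

attribute [local instance] Path.Homotopic.setoid

/-- Statement: X path-connected, A ⊆ X path-connected, f : X̃ → X a covering with X̃
path-connected, Ã = f⁻¹(A) path-connected, basepoints chosen compatibly, and the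
inclusion Ã ↪ X̃ inducing an isomorphism on fundamental groups.  Then the inclusion
A ↪ X induces the stated property on fundamental groups. -/
theorem stmt_1 {X Xt : Type} [TopologicalSpace X] [TopologicalSpace Xt]
    [PathConnectedSpace X] [PathConnectedSpace Xt]
    (f : Xt → X) (hf : IsCoveringMap f)
    (A : Set X) (hA : IsPathConnected A) (hAt : IsPathConnected (f ⁻¹' A))
    (a₀ : A) (b₀ : (f ⁻¹' A : Set Xt)) (hbase : f ↑b₀ = ↑a₀)
    (hiso : Function.Bijective
      (π₁ind (⟨Subtype.val, continuous_subtype_val⟩ : C((f ⁻¹' A : Set Xt), Xt)) b₀)) :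
    Function.Surjective (π₁ind (⟨Subtype.val, continuous_subtype_val⟩ : C(A, X)) a₀) := by
  obtain ⟨a₀v, ha₀⟩ := a₀
  have hbase' : f ↑b₀ = a₀v := hbase
  clear hbase
  subst hbase'
  set x₀ : X := f ↑b₀ with hx₀def
  set a₀ : A := ⟨x₀, ha₀⟩ with ha₀def
  set ι : C((f ⁻¹' A : Set Xt), Xt) := ⟨Subtype.val, continuous_subtype_val⟩ with hιdef
  set ιA : C(A, X) := ⟨Subtype.val, continuous_subtype_val⟩ with hιAdef
  set fC : C(Xt, X) := ⟨f, hf.continuous⟩ with hfCdef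
  set f' : C((f ⁻¹' A : Set Xt), A) :=
    ⟨fun z => ⟨f ↑z, z.2⟩, Continuous.subtype_mk (hf.continuous.comp continuous_subtype_val) _⟩
    with hf'def
  intro p
  obtain ⟨σ, hσ⟩ := @Quotient.exists_rep (Path x₀ x₀) (Path.Homotopic.setoid x₀ x₀) p
  -- lift σ to a path in Xt starting at b₀
  obtain ⟨g, hg, hg0, hglift⟩ := exists_path_lift hf σ ↑b₀ rfl
  set e₁ : Xt := g 1 with he₁def
  set γt : Path (↑b₀ : Xt) e₁ :=
    ⟨⟨fun t => g ↑t, hg.comp continuous_subtype_val⟩, hg0, rfl⟩ with hγtdef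
  have hcomp : ∀ t : unitInterval, f (γt t) = σ t := fun t => hglift t
  have h1 : f e₁ = x₀ := by
    have := hglift 1
    rwa [σ.target] at this
  have he₁mem : e₁ ∈ f ⁻¹' A := by rw [Set.mem_preimage, h1]; exact ha₀
  set δ : Path (⟨e₁, he₁mem⟩ : (f ⁻¹' A : Set Xt)) b₀ :=
    ((hAt.joinedIn e₁ he₁mem ↑b₀ b₀.2).joined_subtype).somePath with hδdef
  set L : Path (↑b₀ : Xt) ↑b₀ := γt.trans (δ.map ι.continuous) with hLdef
  obtain ⟨r, hr⟩ := hiso.2 (@FundamentalGroup.fromPath Xt _ (Subtype.val b₀) ⟦L⟧)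
  have rq : Path.Homotopic.Quotient b₀ b₀ := r
  have hrhom : Path.Homotopic.Quotient.map (r : Path.Homotopic.Quotient b₀ b₀) ι = ⟦L⟧ :=
    congrArg (fun i => i) hr
  set rq : Path.Homotopic.Quotient b₀ b₀ := r with hrqdef
  set κ : Path a₀ a₀ := (δ.map f'.continuous).cast (Subtype.ext h1.symm) rfl with hκdef
  set w : Path x₀ x₀ := κ.map ιA.continuous with hwdef
  have hcomm : ιA.comp f' = fC.comp ι := rfl
  have hLf : L.map fC.continuous = σ.trans w := by
    rw [hLdef, Path.map_trans]
    ext t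
    rw [Path.trans_apply, Path.trans_apply]
    split_ifs with h
    · exact hcomp _
    · rfl
  have key : Path.Homotopic.Quotient.map
      ((Path.Homotopic.Quotient.map rq f').trans ⟦κ.symm⟧) ιA
      = (p : Path.Homotopic.Quotient x₀ x₀) := by
    refine (mapFn_comp _ _ _).trans ?_
    rw [mapFn_mapFn]
    show (Path.Homotopic.Quotient.map rq (fC.comp ι)).trans
      (Path.Homotopic.Quotient.map ⟦κ.symm⟧ ιA) = _
    rw [← mapFn_mapFn, hrhom, ← map_lift',
      ← map_lift', ← Path.map_symm, ← hwdef, hLf, comp_lift']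
    exact (comp_trans_symm ⟦σ⟧ w).trans hσ
  refine ⟨@FundamentalGroup.fromPath A _ a₀
    ((Path.Homotopic.Quotient.map rq f').trans ⟦κ.symm⟧), ?_⟩
  exact key
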